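/- With the notation of the context, the quadratic form 𝓔^{μ,F}(u,u) := 𝓔(u,u) − ∬_{ℝ^d×ℝ^d} u(x)u(y)(e^{F(x,y)}−1)n(x,y) dy dx − ∫u²dμ⁺ + ∫u²dμ⁻ satisfies the identity 𝓔^{μ,F}(u,u) = 𝓔⁻(u,u) + (1/2)∬_{ℝ^d×ℝ^d} (u(x)−u(y))² G⁺(x,y) n(x,y) dx dy − ∫_{ℝ^d} u² dρ⁺, and all integrals appearing are finite. -/

import Mathlib

noncomputable section

open MeasureTheory Real ENNReal Set
open scoped Classical

/-- The state space `ℝ^d` with the Euclidean norm and Lebesgue measure. -/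
abbrev V (d : ℕ) := EuclideanSpace ℝ (Fin d)

/-- `I(r) = ∫₀^∞ s^{(d+α)/2-1} e^{-s/4 - r²/s} ds`. -/
def Ifun (d : ℕ) (α r : ℝ) : ℝ :=
  ∫ s in Set.Ioi (0 : ℝ), s ^ (((d : ℝ) + α) / 2 - 1) * Real.exp (-s / 4 - r ^ 2 / s)

/-- `ψ(r) = I(r)/I(0)`. -/
def psi (d : ℕ) (α r : ℝ) : ℝ := Ifun d α r / Ifun d α 0

/-- The constant `C(d,-α) = α Γ((d+α)/2) / (2^{1-α} π^{d/2} Γ(1-α/2))`. -/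
def Cconst (d : ℕ) (α : ℝ) : ℝ :=
  α * Real.Gamma (((d : ℝ) + α) / 2) /
    (2 ^ (1 - α) * Real.pi ^ ((d : ℝ) / 2) * Real.Gamma (1 - α / 2))

/-- Jump kernel density `n(x,y) = 2C(d,-α) ψ(m^{1/α}|x-y|) |x-y|^{-(d+α)}` for `x ≠ y`,
with `n(x,x) = 0`. -/
def nker (d : ℕ) (α m : ℝ) (x y : V d) : ℝ :=
  if x = y then 0
  else 2 * Cconst d α * psi d α (m ^ (1 / α) * ‖x - y‖) / ‖x - y‖ ^ ((d : ℝ) + α)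

/-- `F⁺ = F ∨ 0`. -/
def Fp (d : ℕ) (F : V d → V d → ℝ) (x y : V d) : ℝ := max (F x y) 0

/-- `F⁻ = -(F ∧ 0)`. -/
def Fm (d : ℕ) (F : V d → V d → ℝ) (x y : V d) : ℝ := -(min (F x y) 0)

/-- `G⁺ = (e^{F⁺} - 1) e^{-F⁻}`. -/
def Gp (d : ℕ) (F : V d → V d → ℝ) (x y : V d) : ℝ :=
  (Real.exp (Fp d F x y) - 1) * Real.exp (-(Fm d F x y))

/-- `G⁻ = 1 - e^{-F⁻}`. -/
def Gm (d : ℕ) (F : V d → V d → ℝ) (x y : V d) : ℝ := 1 - Real.exp (-(Fm d F x y))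

/-- The Dirichlet form `𝓔(u,u) = (1/2)∬ (u(x)-u(y))² n(x,y) dx dy` (in `[0,∞]`). -/
def En (d : ℕ) (α m : ℝ) (u : V d → ℝ) : ℝ≥0∞ :=
  (1 / 2) * ∫⁻ x, ∫⁻ y, ENNReal.ofReal ((u x - u y) ^ 2 * nker d α m x y)

/-- The jump-type energy `∬ (u(x)-u(y))² G(x,y) n(x,y) dx dy` (in `[0,∞]`). -/
def Jform (d : ℕ) (α m : ℝ) (G : V d → V d → ℝ) (u : V d → ℝ) : ℝ≥0∞ :=
  ∫⁻ x, ∫⁻ y, ENNReal.ofReal ((u x - u y) ^ 2 * G x y * nker d α m x y)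

/-- `NG(x) = ∫ G(x,y) n(x,y) dy` (in `[0,∞]`). -/
def NG (d : ℕ) (α m : ℝ) (G : V d → V d → ℝ) (x : V d) : ℝ≥0∞ :=
  ∫⁻ y, ENNReal.ofReal (G x y * nker d α m x y)

/-- `ρ = μ + ξ_G` where `ξ_G(dx) = NG(x) dx`. -/
def rho (d : ℕ) (α m : ℝ) (G : V d → V d → ℝ) (μ : Measure (V d)) : Measure (V d) :=
  μ + volume.withDensity (NG d α m G)

/-- `∫ u² dμ` (in `[0,∞]`). -/
def sqInt (d : ℕ) (u : V d → ℝ) (μ : Measure (V d)) : ℝ≥0∞ :=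
  ∫⁻ x, ENNReal.ofReal ((u x) ^ 2) ∂μ

/-- The cross term `∬ u(x)u(y)(e^{F(x,y)}-1) n(x,y) dy dx` (Lebesgue–Bochner integral on the
product space). -/
def crossInt (d : ℕ) (α m : ℝ) (F : V d → V d → ℝ) (u : V d → ℝ) : ℝ :=
  ∫ p : V d × V d, u p.1 * u p.2 * (Real.exp (F p.1 p.2) - 1) * nker d α m p.1 p.2

/-- The quadratic form
`𝓔^{μ,F}(u,u) = 𝓔(u,u) - ∬ u(x)u(y)(e^{F(x,y)}-1)n(x,y) dy dx - ∫ u² dμ⁺ + ∫ u² dμ⁻`. -/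
def EmuF (d : ℕ) (α m : ℝ) (F : V d → V d → ℝ) (μp μm : Measure (V d)) (u : V d → ℝ) : ℝ :=
  (En d α m u).toReal - crossInt d α m F u - (sqInt d u μp).toReal + (sqInt d u μm).toReal

/-- The killed form
`𝓔⁻(u,u) = (1/2)∬ (u(x)-u(y))² e^{-F⁻(x,y)} n(x,y) dx dy + ∫ u² dρ⁻` (in `[0,∞]`). -/
def EnMinus (d : ℕ) (α m : ℝ) (F : V d → V d → ℝ) (μm : Measure (V d)) (u : V d → ℝ) : ℝ≥0∞ :=
  (1 / 2) * (∫⁻ x, ∫⁻ y, ENNReal.ofReal ((u x - u y) ^ 2 * Real.exp (-(Fm d F x y)) * nker d α m x y))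
    + sqInt d u (rho d α m (Gm d F) μm)

/-! ### Auxiliary lemmas -/

lemma Ifun_measurable (d : ℕ) (α : ℝ) : Measurable (Ifun d α) := by
  have h : StronglyMeasurable
      (fun p : ℝ × ℝ => p.2 ^ (((d : ℝ) + α) / 2 - 1) * Real.exp (-p.2 / 4 - p.1 ^ 2 / p.2)) := by
    apply Measurable.stronglyMeasurable
    fun_prop
  exact (h.integral_prod_right' (ν := volume.restrict (Set.Ioi (0:ℝ)))).measurable

lemma psi_measurable (d : ℕ) (α : ℝ) : Measurable (psi d α) :=
  (Ifun_measurable d α).div measurable_const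

lemma Ifun_nonneg (d : ℕ) (α r : ℝ) : 0 ≤ Ifun d α r := by
  apply MeasureTheory.setIntegral_nonneg measurableSet_Ioi
  intro s hs
  exact mul_nonneg (Real.rpow_nonneg (le_of_lt hs) _) (Real.exp_nonneg _)

lemma psi_nonneg (d : ℕ) (α r : ℝ) : 0 ≤ psi d α r :=
  div_nonneg (Ifun_nonneg d α r) (Ifun_nonneg d α 0)

lemma Cconst_nonneg (d : ℕ) {α : ℝ} (hα0 : 0 < α) (hα2 : α < 2) : 0 ≤ Cconst d α := by
  apply div_nonneg
  · exact mul_nonneg hα0.le (Real.Gamma_pos_of_pos (by positivity)).le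
  · have h1 : (0:ℝ) < 2 ^ (1 - α) := Real.rpow_pos_of_pos two_pos _
    have h2 : (0:ℝ) < Real.pi ^ ((d : ℝ) / 2) := Real.rpow_pos_of_pos Real.pi_pos _
    have h3 : 0 < Real.Gamma (1 - α / 2) := Real.Gamma_pos_of_pos (by linarith)
    positivity

lemma nker_nonneg (d : ℕ) {α : ℝ} (m : ℝ) (hα0 : 0 < α) (hα2 : α < 2) (x y : V d) :
    0 ≤ nker d α m x y := by
  unfold nker
  split
  · exact le_refl 0
  · apply div_nonneg
    · exact mul_nonneg (mul_nonneg two_pos.le (Cconst_nonneg d hα0 hα2)) (psi_nonneg d α _)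
    · exact Real.rpow_nonneg (norm_nonneg _) _

lemma nker_symm (d : ℕ) (α m : ℝ) (x y : V d) : nker d α m x y = nker d α m y x := by
  unfold nker
  rw [norm_sub_rev]
  congr 1
  simp [eq_comm]

lemma nker_measurable (d : ℕ) (α m : ℝ) : Measurable (Function.uncurry (nker d α m)) := by
  have hdiag : MeasurableSet {p : V d × V d | p.1 = p.2} :=
    (isClosed_eq continuous_fst continuous_snd).measurableSet
  have hnorm : Measurable (fun p : V d × V d => ‖p.1 - p.2‖) := by fun_prop
  unfold Function.uncurry nker
  refine Measurable.ite hdiag measurable_const ?_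
  apply Measurable.div
  · exact (measurable_const.mul ((psi_measurable d α).comp (measurable_const.mul hnorm)))
  · fun_prop

lemma master_lemma {X : Type*} [MeasurableSpace X] {ν : Measure X} [SigmaFinite ν]
    (k : X → X → ℝ) (hk : Measurable (Function.uncurry k))
    (hk0 : ∀ x y, 0 ≤ k x y) (hks : ∀ x y, k x y = k y x)
    (u : X → ℝ) (hu : Measurable u)
    (hT : (∫⁻ p : X × X, ENNReal.ofReal ((u p.1)^2 * k p.1 p.2) ∂ν.prod ν) ≠ ⊤) :
    Integrable (fun p : X × X => u p.1 * u p.2 * k p.1 p.2) (ν.prod ν) ∧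
    (∫⁻ p : X × X, ENNReal.ofReal ((u p.1 - u p.2)^2 * k p.1 p.2) ∂ν.prod ν) ≠ ⊤ ∧
    (1/2) * (∫⁻ p : X × X, ENNReal.ofReal ((u p.1 - u p.2)^2 * k p.1 p.2) ∂ν.prod ν).toReal
      = (∫⁻ p : X × X, ENNReal.ofReal ((u p.1)^2 * k p.1 p.2) ∂ν.prod ν).toReal
        - ∫ p : X × X, u p.1 * u p.2 * k p.1 p.2 ∂ν.prod ν := by
  set T := ∫⁻ p : X × X, ENNReal.ofReal ((u p.1)^2 * k p.1 p.2) ∂ν.prod ν with hTdef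
  have hkp : Measurable (fun p : X × X => k p.1 p.2) := hk
  have hswap : (∫⁻ p : X × X, ENNReal.ofReal ((u p.2)^2 * k p.1 p.2) ∂ν.prod ν) = T := by
    rw [hTdef]
    rw [← lintegral_prod_swap (fun p : X × X => ENNReal.ofReal ((u p.1)^2 * k p.1 p.2))]
    apply lintegral_congr
    intro z
    simp only [Prod.fst_swap, Prod.snd_swap]
    rw [hks z.2 z.1]
  have hf1m : Measurable (fun p : X × X => (u p.1)^2 * k p.1 p.2) :=
    ((hu.comp measurable_fst).pow_const 2).mul hkp
  have hf2m : Measurable (fun p : X × X => (u p.2)^2 * k p.1 p.2) :=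
    ((hu.comp measurable_snd).pow_const 2).mul hkp
  have hf1nn : ∀ p : X × X, 0 ≤ (u p.1)^2 * k p.1 p.2 :=
    fun p => mul_nonneg (sq_nonneg _) (hk0 _ _)
  have hf2nn : ∀ p : X × X, 0 ≤ (u p.2)^2 * k p.1 p.2 :=
    fun p => mul_nonneg (sq_nonneg _) (hk0 _ _)
  have hf1 : Integrable (fun p : X × X => (u p.1)^2 * k p.1 p.2) (ν.prod ν) := by
    refine ⟨hf1m.aestronglyMeasurable, ?_⟩
    rw [hasFiniteIntegral_iff_ofReal (Filter.Eventually.of_forall hf1nn)]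
    exact lt_top_iff_ne_top.2 hT
  have hf2 : Integrable (fun p : X × X => (u p.2)^2 * k p.1 p.2) (ν.prod ν) := by
    refine ⟨hf2m.aestronglyMeasurable, ?_⟩
    rw [hasFiniteIntegral_iff_ofReal (Filter.Eventually.of_forall hf2nn)]
    rw [hswap]
    exact lt_top_iff_ne_top.2 hT
  have hf3 : Integrable (fun p : X × X => u p.1 * u p.2 * k p.1 p.2) (ν.prod ν) := by
    refine Integrable.mono' ((hf1.add hf2).const_mul (1/2))
      (((hu.comp measurable_fst).mul (hu.comp measurable_snd)).mul hkp).aestronglyMeasurable ?_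
    refine Filter.Eventually.of_forall fun p => ?_
    have h1 : |u p.1 * u p.2 * k p.1 p.2| = |u p.1 * u p.2| * k p.1 p.2 := by
      rw [abs_mul, abs_of_nonneg (hk0 _ _)]
    rw [Real.norm_eq_abs, h1]
    have h2 : |u p.1 * u p.2| ≤ (1/2) * ((u p.1)^2 + (u p.2)^2) := by
      rw [abs_mul]
      nlinarith [sq_nonneg (|u p.1| - |u p.2|), sq_abs (u p.1), sq_abs (u p.2),
        abs_nonneg (u p.1), abs_nonneg (u p.2)]
    calc |u p.1 * u p.2| * k p.1 p.2 ≤ (1/2) * ((u p.1)^2 + (u p.2)^2) * k p.1 p.2 :=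
          mul_le_mul_of_nonneg_right h2 (hk0 _ _)
      _ = 1/2 * ((u p.1)^2 * k p.1 p.2 + (u p.2)^2 * k p.1 p.2) := by ring
  have hJle : (∫⁻ p : X × X, ENNReal.ofReal ((u p.1 - u p.2)^2 * k p.1 p.2) ∂ν.prod ν)
      ≤ 2 * T + 2 * T := by
    have hmono : ∀ p : X × X, ENNReal.ofReal ((u p.1 - u p.2)^2 * k p.1 p.2)
        ≤ 2 * ENNReal.ofReal ((u p.1)^2 * k p.1 p.2)
          + 2 * ENNReal.ofReal ((u p.2)^2 * k p.1 p.2) := by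
      intro p
      have h2 : (2:ℝ≥0∞) = ENNReal.ofReal 2 := by simp
      rw [h2, ← ENNReal.ofReal_mul (by norm_num), ← ENNReal.ofReal_mul (by norm_num),
        ← ENNReal.ofReal_add (mul_nonneg (by norm_num) (hf1nn p))
          (mul_nonneg (by norm_num) (hf2nn p))]
      apply ENNReal.ofReal_le_ofReal
      nlinarith [hk0 p.1 p.2, sq_nonneg (u p.1 + u p.2)]
    calc (∫⁻ p : X × X, ENNReal.ofReal ((u p.1 - u p.2)^2 * k p.1 p.2) ∂ν.prod ν)
        ≤ ∫⁻ p : X × X, (2 * ENNReal.ofReal ((u p.1)^2 * k p.1 p.2)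
            + 2 * ENNReal.ofReal ((u p.2)^2 * k p.1 p.2)) ∂ν.prod ν := lintegral_mono hmono
      _ = 2 * T + 2 * T := by
          rw [lintegral_add_left ((hf1m.ennreal_ofReal).const_mul 2),
            lintegral_const_mul 2 hf1m.ennreal_ofReal, lintegral_const_mul 2 hf2m.ennreal_ofReal,
            hswap]
  have hJfin : (∫⁻ p : X × X, ENNReal.ofReal ((u p.1 - u p.2)^2 * k p.1 p.2) ∂ν.prod ν) ≠ ⊤ := by
    refine ne_top_of_le_ne_top ?_ hJle
    simp [ENNReal.add_ne_top, ENNReal.mul_ne_top, hT]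
  refine ⟨hf3, hJfin, ?_⟩
  have hJm : Measurable (fun p : X × X => (u p.1 - u p.2)^2 * k p.1 p.2) :=
    (((hu.comp measurable_fst).sub (hu.comp measurable_snd)).pow_const 2).mul hkp
  have hJnn : ∀ p : X × X, 0 ≤ (u p.1 - u p.2)^2 * k p.1 p.2 :=
    fun p => mul_nonneg (sq_nonneg _) (hk0 _ _)
  have hJeq : (∫ p : X × X, (u p.1 - u p.2)^2 * k p.1 p.2 ∂ν.prod ν)
      = (∫⁻ p : X × X, ENNReal.ofReal ((u p.1 - u p.2)^2 * k p.1 p.2) ∂ν.prod ν).toReal :=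
    integral_eq_lintegral_of_nonneg_ae (Filter.Eventually.of_forall hJnn)
      hJm.aestronglyMeasurable
  have hT1 : (∫ p : X × X, (u p.1)^2 * k p.1 p.2 ∂ν.prod ν) = T.toReal :=
    integral_eq_lintegral_of_nonneg_ae (Filter.Eventually.of_forall hf1nn)
      hf1m.aestronglyMeasurable
  have hT2 : (∫ p : X × X, (u p.2)^2 * k p.1 p.2 ∂ν.prod ν) = T.toReal := by
    rw [integral_eq_lintegral_of_nonneg_ae (Filter.Eventually.of_forall hf2nn)
      hf2m.aestronglyMeasurable, hswap]
  have hsplit : (∫ p : X × X, (u p.1 - u p.2)^2 * k p.1 p.2 ∂ν.prod ν)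
      = (∫ p : X × X, (u p.1)^2 * k p.1 p.2 ∂ν.prod ν)
        + (∫ p : X × X, (u p.2)^2 * k p.1 p.2 ∂ν.prod ν)
        - 2 * ∫ p : X × X, u p.1 * u p.2 * k p.1 p.2 ∂ν.prod ν := by
    have e0 : (fun p : X × X => (u p.1 - u p.2)^2 * k p.1 p.2)
        = fun p : X × X => ((fun q : X × X => (u q.1)^2 * k q.1 q.2)
            + (fun q : X × X => (u q.2)^2 * k q.1 q.2)) p
          - (fun q : X × X => 2 * (u q.1 * u q.2 * k q.1 q.2)) p := by
      funext p
      simp only [Pi.add_apply]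
      ring
    rw [e0, integral_sub (hf1.add hf2) (hf3.const_mul 2)]
    simp only [Pi.add_apply]
    rw [integral_add hf1 hf2, integral_const_mul]
  rw [← hJeq, hsplit, hT1, hT2]
  ring

/-- `𝓔^{μ,F}(u,u) = 𝓔⁻(u,u) + (1/2)∬ (u(x)-u(y))² G⁺(x,y) n(x,y) dx dy - ∫ u² dρ⁺`,
and all integrals appearing are finite. -/
theorem schrodinger_form_killed_identity
    (d : ℕ) (hd : 1 ≤ d) (α m : ℝ) (hα0 : 0 < α) (hα2 : α < 2) (hm : 0 ≤ m)
    (F : V d → V d → ℝ) (hFmeas : Measurable (Function.uncurry F))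
    (hFbound : ∃ M : ℝ, ∀ x y, |F x y| ≤ M)
    (hFsymm : ∀ x y, F x y = F y x) (hFdiag : ∀ x, F x x = 0)
    (μp μm : Measure (V d))
    (u : V d → ℝ) (hu : Measurable u)
    (hE : En d α m u ≠ ⊤)
    (hμp : sqInt d u μp ≠ ⊤) (hμm : sqInt d u μm ≠ ⊤)
    (hNGp : ∫⁻ x, ENNReal.ofReal ((u x) ^ 2) * NG d α m (Gp d F) x ≠ ⊤)
    (hNGm : ∫⁻ x, ENNReal.ofReal ((u x) ^ 2) * NG d α m (Gm d F) x ≠ ⊤) :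
    Integrable
      (fun p : V d × V d => u p.1 * u p.2 * (Real.exp (F p.1 p.2) - 1) * nker d α m p.1 p.2) ∧
    EnMinus d α m F μm u ≠ ⊤ ∧ Jform d α m (Gp d F) u ≠ ⊤ ∧
    sqInt d u (rho d α m (Gp d F) μp) ≠ ⊤ ∧
    EmuF d α m F μp μm u
      = (EnMinus d α m F μm u).toReal
        + (1 / 2) * (Jform d α m (Gp d F) u).toReal
        - (sqInt d u (rho d α m (Gp d F) μp)).toReal := by
  classical
  -- kernel facts
  have hnmeas : Measurable (Function.uncurry (nker d α m)) := nker_measurable d α m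
  have hn0 : ∀ x y : V d, 0 ≤ nker d α m x y := fun x y => nker_nonneg d m hα0 hα2 x y
  have hns : ∀ x y : V d, nker d α m x y = nker d α m y x := nker_symm d α m
  -- F and G measurability
  have hFpm : Measurable (fun p : V d × V d => Fp d F p.1 p.2) := hFmeas.max measurable_const
  have hFmm : Measurable (fun p : V d × V d => Fm d F p.1 p.2) :=
    (hFmeas.min measurable_const).neg
  have hGpmeas : Measurable (fun p : V d × V d => Gp d F p.1 p.2) :=
    (hFpm.exp.sub measurable_const).mul hFmm.neg.exp
  have hGmmeas : Measurable (fun p : V d × V d => Gm d F p.1 p.2) :=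
    measurable_const.sub hFmm.neg.exp
  -- nonnegativity and symmetry of G
  have hFm0 : ∀ x y : V d, 0 ≤ Fm d F x y := fun x y => by
    have : min (F x y) 0 ≤ 0 := min_le_right _ _
    simp only [Fm]
    linarith
  have hGp0 : ∀ x y : V d, 0 ≤ Gp d F x y := by
    intro x y
    apply mul_nonneg _ (Real.exp_nonneg _)
    have h1 : (1:ℝ) = Real.exp 0 := by simp
    have h2 : Real.exp 0 ≤ Real.exp (Fp d F x y) := Real.exp_le_exp.2 (le_max_right _ _)
    rw [Real.exp_zero] at h2
    linarith
  have hGm0 : ∀ x y : V d, 0 ≤ Gm d F x y := by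
    intro x y
    have h2 : Real.exp (-(Fm d F x y)) ≤ Real.exp 0 :=
      Real.exp_le_exp.2 (neg_nonpos_of_nonneg (hFm0 x y))
    simp only [Gm]
    simp only [Real.exp_zero] at h2
    linarith
  have hGps : ∀ x y : V d, Gp d F x y = Gp d F y x := fun x y => by
    simp only [Gp, Fp, Fm, hFsymm x y]
  have hGms : ∀ x y : V d, Gm d F x y = Gm d F y x := fun x y => by
    simp only [Gm, Fm, hFsymm x y]
  -- the two algebraic identities
  have hsum1 : ∀ x y : V d, Real.exp (-(Fm d F x y)) + Gm d F x y = 1 := fun x y => by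
    simp only [Gm]; ring
  have hdiff : ∀ x y : V d, Real.exp (F x y) - 1 = Gp d F x y - Gm d F x y := by
    intro x y
    simp only [Gp, Gm, Fp, Fm, neg_neg]
    rw [sub_mul, one_mul, ← Real.exp_add, max_add_min, add_zero]
    ring
  -- the product kernels
  set kp : V d → V d → ℝ := fun x y => Gp d F x y * nker d α m x y with hkpdef
  set km : V d → V d → ℝ := fun x y => Gm d F x y * nker d α m x y with hkmdef
  have hkpm : Measurable (Function.uncurry kp) := hGpmeas.mul hnmeas
  have hkmm : Measurable (Function.uncurry km) := hGmmeas.mul hnmeas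
  have hkp0 : ∀ x y : V d, 0 ≤ kp x y := fun x y => mul_nonneg (hGp0 x y) (hn0 x y)
  have hkm0 : ∀ x y : V d, 0 ≤ km x y := fun x y => mul_nonneg (hGm0 x y) (hn0 x y)
  have hkps : ∀ x y : V d, kp x y = kp y x := fun x y => by
    simp only [hkpdef, hGps x y, hns x y]
  have hkms : ∀ x y : V d, km x y = km y x := fun x y => by
    simp only [hkmdef, hGms x y, hns x y]
  -- NG measurability
  have hNGpm : Measurable (NG d α m (Gp d F)) := by
    apply Measurable.lintegral_prod_right (f := fun x y =>
      ENNReal.ofReal (Gp d F x y * nker d α m x y))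
    exact (hGpmeas.mul hnmeas).ennreal_ofReal
  have hNGmm : Measurable (NG d α m (Gm d F)) := by
    apply Measurable.lintegral_prod_right (f := fun x y =>
      ENNReal.ofReal (Gm d F x y * nker d α m x y))
    exact (hGmmeas.mul hnmeas).ennreal_ofReal
  -- convert the NG-hypotheses into product integrals
  have hT_eq : ∀ (G : V d → V d → ℝ), Measurable (fun p : V d × V d => G p.1 p.2) →
      (∫⁻ p : V d × V d, ENNReal.ofReal ((u p.1)^2 * (G p.1 p.2 * nker d α m p.1 p.2))
          ∂((volume : Measure (V d)).prod volume))
        = ∫⁻ x, ENNReal.ofReal ((u x)^2) * NG d α m G x := by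
    intro G hG
    rw [← lintegral_lintegral (f := fun x y =>
      ENNReal.ofReal ((u x)^2 * (G x y * nker d α m x y))) (μ := volume) (ν := volume)
      (Measurable.aemeasurable (by exact (((hu.comp measurable_fst).pow_const 2).mul (hG.mul hnmeas)).ennreal_ofReal))]
    apply lintegral_congr
    intro x
    unfold NG
    rw [← lintegral_const_mul' _ _ ENNReal.ofReal_ne_top]
    apply lintegral_congr
    intro y
    rw [← ENNReal.ofReal_mul (sq_nonneg _)]
  have hTp : (∫⁻ p : V d × V d, ENNReal.ofReal ((u p.1)^2 * kp p.1 p.2)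
      ∂((volume : Measure (V d)).prod volume)) ≠ ⊤ := by
    rw [hT_eq (Gp d F) hGpmeas]; exact hNGp
  have hTm : (∫⁻ p : V d × V d, ENNReal.ofReal ((u p.1)^2 * km p.1 p.2)
      ∂((volume : Measure (V d)).prod volume)) ≠ ⊤ := by
    rw [hT_eq (Gm d F) hGmmeas]; exact hNGm
  -- master lemma applications
  obtain ⟨hIp, hJpfin, hidp⟩ := master_lemma kp hkpm hkp0 hkps u hu hTp
  obtain ⟨hIm, hJmfin, hidm⟩ := master_lemma km hkmm hkm0 hkms u hu hTm
  -- product-level quantities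
  set pr : Measure (V d × V d) := (volume : Measure (V d)).prod volume with hpr
  set Eprod := ∫⁻ p : V d × V d, ENNReal.ofReal ((u p.1 - u p.2)^2 * nker d α m p.1 p.2) ∂pr
    with hEproddef
  set Emprod := ∫⁻ p : V d × V d,
    ENNReal.ofReal ((u p.1 - u p.2)^2 * (Real.exp (-(Fm d F p.1 p.2)) * nker d α m p.1 p.2)) ∂pr
    with hEmproddef
  set Jmprod := ∫⁻ p : V d × V d, ENNReal.ofReal ((u p.1 - u p.2)^2 * km p.1 p.2) ∂pr
  set Jpprod := ∫⁻ p : V d × V d, ENNReal.ofReal ((u p.1 - u p.2)^2 * kp p.1 p.2) ∂pr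
  set Tpprod := ∫⁻ p : V d × V d, ENNReal.ofReal ((u p.1)^2 * kp p.1 p.2) ∂pr with hTppdef
  set Tmprod := ∫⁻ p : V d × V d, ENNReal.ofReal ((u p.1)^2 * km p.1 p.2) ∂pr with hTmpdef
  have hTp_eq2 : (∫⁻ x, ENNReal.ofReal ((u x)^2) * NG d α m (Gp d F) x) = Tpprod := by
    rw [← hT_eq (Gp d F) hGpmeas]
  have hTm_eq2 : (∫⁻ x, ENNReal.ofReal ((u x)^2) * NG d α m (Gm d F) x) = Tmprod := by
    rw [← hT_eq (Gm d F) hGmmeas]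
  set Pp := ∫ p : V d × V d, u p.1 * u p.2 * kp p.1 p.2 ∂pr
  set Pm := ∫ p : V d × V d, u p.1 * u p.2 * km p.1 p.2 ∂pr
  have hEmmeas : Measurable (fun p : V d × V d =>
      ENNReal.ofReal ((u p.1 - u p.2)^2 * (Real.exp (-(Fm d F p.1 p.2)) * nker d α m p.1 p.2))) :=
    ((((hu.comp measurable_fst).sub (hu.comp measurable_snd)).pow_const 2).mul
      (hFmm.neg.exp.mul hnmeas)).ennreal_ofReal
  -- splitting of the full energy
  have hsplitE : Eprod = Emprod + Jmprod := by
    rw [hEproddef, hEmproddef, ← lintegral_add_left hEmmeas]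
    apply lintegral_congr
    intro p
    rw [← ENNReal.ofReal_add (mul_nonneg (sq_nonneg _)
      (mul_nonneg (Real.exp_nonneg _) (hn0 _ _))) (mul_nonneg (sq_nonneg _) (hkm0 _ _))]
    congr 1
    have h := hsum1 p.1 p.2
    simp only [hkmdef]
    linear_combination (-((u p.1 - u p.2)^2 * nker d α m p.1 p.2)) * h
  have hEn_eq : En d α m u = (1/2) * Eprod := by
    unfold En
    congr 1
    exact lintegral_lintegral (f := fun x y =>
      ENNReal.ofReal ((u x - u y)^2 * nker d α m x y))
      ((((hu.comp measurable_fst).sub (hu.comp measurable_snd)).pow_const 2).mul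
        hnmeas).ennreal_ofReal.aemeasurable
  have hEprodfin : Eprod ≠ ⊤ := by
    intro h
    apply hE
    rw [hEn_eq, h, ENNReal.mul_top (by norm_num)]
  have hEmfin : Emprod ≠ ⊤ := by
    refine ne_top_of_le_ne_top hEprodfin ?_
    rw [hsplitE]
    exact le_self_add
  -- rho decomposition
  have hrho : ∀ (G : V d → V d → ℝ), Measurable (NG d α m G) → ∀ ν : Measure (V d),
      sqInt d u (rho d α m G ν)
        = sqInt d u ν + ∫⁻ x, ENNReal.ofReal ((u x)^2) * NG d α m G x := by
    intro G hG ν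
    unfold sqInt rho
    rw [lintegral_add_measure]
    congr 1
    rw [lintegral_withDensity_eq_lintegral_mul volume hG (hu.pow_const 2).ennreal_ofReal]
    apply lintegral_congr
    intro x
    exact mul_comm _ _
  -- shape conversions for Jform and EnMinus
  have hJp_shape : Jform d α m (Gp d F) u = Jpprod := by
    unfold Jform
    rw [lintegral_lintegral (f := fun x y =>
      ENNReal.ofReal ((u x - u y)^2 * Gp d F x y * nker d α m x y)) (μ := volume) (ν := volume)
      (Measurable.aemeasurable (by exact (((((hu.comp measurable_fst).sub (hu.comp measurable_snd)).pow_const 2).mul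
        hGpmeas).mul hnmeas).ennreal_ofReal))]
    apply lintegral_congr
    intro p
    exact congrArg ENNReal.ofReal (mul_assoc _ _ _)
  have hEm_shape : (∫⁻ x, ∫⁻ y,
      ENNReal.ofReal ((u x - u y) ^ 2 * Real.exp (-(Fm d F x y)) * nker d α m x y)) = Emprod := by
    rw [lintegral_lintegral (f := fun x y =>
      ENNReal.ofReal ((u x - u y)^2 * Real.exp (-(Fm d F x y)) * nker d α m x y)) (μ := volume) (ν := volume)
      (Measurable.aemeasurable (by exact (((((hu.comp measurable_fst).sub (hu.comp measurable_snd)).pow_const 2).mul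
        hFmm.neg.exp).mul hnmeas).ennreal_ofReal))]
    apply lintegral_congr
    intro p
    exact congrArg ENNReal.ofReal (mul_assoc _ _ _)
  have hEnMinus_eq : EnMinus d α m F μm u
      = (1/2) * Emprod + (sqInt d u μm + Tmprod) := by
    unfold EnMinus
    rw [hEm_shape, hrho (Gm d F) hNGmm μm, hTm_eq2]
  have hEnMinusfin : EnMinus d α m F μm u ≠ ⊤ := by
    rw [hEnMinus_eq]
    refine ENNReal.add_ne_top.2 ⟨?_, ENNReal.add_ne_top.2 ⟨hμm, hTm⟩⟩
    exact ENNReal.mul_ne_top (by norm_num) hEmfin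
  have hJform_fin : Jform d α m (Gp d F) u ≠ ⊤ := by
    rw [hJp_shape]; exact hJpfin
  have hsqrho_p : sqInt d u (rho d α m (Gp d F) μp) = sqInt d u μp + Tpprod := by
    rw [hrho (Gp d F) hNGpm μp, hTp_eq2]
  have hsqrho_fin : sqInt d u (rho d α m (Gp d F) μp) ≠ ⊤ := by
    rw [hsqrho_p]
    exact ENNReal.add_ne_top.2 ⟨hμp, hTp⟩
  -- cross-term identity
  have hcross_eq : crossInt d α m F u = Pp - Pm := by
    unfold crossInt
    rw [Measure.volume_eq_prod]
    rw [integral_congr_ae (g := fun p : V d × V d =>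
      u p.1 * u p.2 * kp p.1 p.2 - u p.1 * u p.2 * km p.1 p.2)
      (Filter.Eventually.of_forall fun p => by
        simp only [hkpdef, hkmdef]
        have h := hdiff p.1 p.2
        linear_combination (u p.1 * u p.2 * nker d α m p.1 p.2) * h)]
    exact integral_sub hIp hIm
  have hIcross : Integrable
      (fun p : V d × V d => u p.1 * u p.2 * (Real.exp (F p.1 p.2) - 1) * nker d α m p.1 p.2)
      (volume : Measure (V d × V d)) := by
    rw [Measure.volume_eq_prod]
    refine (hIp.sub hIm).congr (Filter.Eventually.of_forall fun p => ?_)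
    simp only [Pi.sub_apply, hkpdef, hkmdef]
    have h := hdiff p.1 p.2
    linear_combination (-(u p.1 * u p.2 * nker d α m p.1 p.2)) * h
  refine ⟨hIcross, hEnMinusfin, hJform_fin, hsqrho_fin, ?_⟩
  -- the main identity
  have h12 : ((1/2 : ℝ≥0∞)).toReal = (1/2 : ℝ) := by norm_num
  have hEn_toReal : (En d α m u).toReal
      = (1/2) * Emprod.toReal + (1/2) * Jmprod.toReal := by
    rw [hEn_eq, hsplitE, ENNReal.toReal_mul, ENNReal.toReal_add hEmfin hJmfin, h12]
    ring
  have hEnMinus_toReal : (EnMinus d α m F μm u).toReal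
      = (1/2) * Emprod.toReal + (sqInt d u μm).toReal + Tmprod.toReal := by
    have hTmfin : Tmprod ≠ ⊤ := hTm
    rw [hEnMinus_eq, ENNReal.toReal_add, ENNReal.toReal_mul, ENNReal.toReal_add hμm hTmfin, h12]
    · ring
    · exact ENNReal.mul_ne_top (by norm_num) hEmfin
    · exact ENNReal.add_ne_top.2 ⟨hμm, hTmfin⟩
  have hsqrho_toReal : (sqInt d u (rho d α m (Gp d F) μp)).toReal
      = (sqInt d u μp).toReal + Tpprod.toReal := by
    rw [hsqrho_p, ENNReal.toReal_add hμp hTp]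
  unfold EmuF
  rw [hEn_toReal, hcross_eq, hEnMinus_toReal, hJp_shape, hsqrho_toReal]
  linarith [hidp, hidm]
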